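/- Let f : ℝ^p → ℝ be twice continuously differentiable with ∇²f(θ) ⪰ m·I for all θ (m > 0) and with L-Lipschitz Hessian. Let θ ∈ ℝ^p with ‖∇f(θ)‖₂ ≤ η for some η > 0, and suppose g(θ) ∈ ℝ^p and H(θ) ∈ ℝ^{p×p} satisfy ‖g(θ) − ∇f(θ)‖₂ ≤ γ_g and ‖H(θ) − ∇²f(θ)‖₂ ≤ γ_h ≤ m/2. Then, with Δθ_nt = −H(θ)⁻¹g(θ), one has ‖∇f(θ + Δθ_nt)‖₂ ≤ (2L/m²)‖∇f(θ)‖₂² + η·(4γ_g L/m² + 2γ_h/m) + 2Lγ_g²/m² + γ_g + 2γ_g γ_h/m. -/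

import Mathlib

open scoped RealInnerProductSpace

/-- The Hessian of `f`, as the Fréchet derivative of the gradient. -/
noncomputable def hessianOf {p : ℕ} (f : EuclideanSpace ℝ (Fin p) → ℝ)
    (θ : EuclideanSpace ℝ (Fin p)) :
    EuclideanSpace ℝ (Fin p) →L[ℝ] EuclideanSpace ℝ (Fin p) :=
  fderiv ℝ (gradient f) θ

set_option maxHeartbeats 1000000 in
set_option synthInstance.maxHeartbeats 200000 in
/-- bound on the gradient at the next noisy Newton iterate. -/
theorem robust_newton_gradient_recursion {p : ℕ} (f : EuclideanSpace ℝ (Fin p) → ℝ)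
    (m L η γg γh : ℝ) (hm : 0 < m) (hL : 0 < L) (hηpos : 0 < η)
    (hf : ContDiff ℝ 2 f)
    (hconv : ∀ θ' v : EuclideanSpace ℝ (Fin p), m * ‖v‖ ^ 2 ≤ ⟪hessianOf f θ' v, v⟫)
    (hlip : ∀ θ₁ θ₂ : EuclideanSpace ℝ (Fin p),
      ‖hessianOf f θ₁ - hessianOf f θ₂‖ ≤ L * ‖θ₁ - θ₂‖)
    (θ : EuclideanSpace ℝ (Fin p)) (hθ : ‖gradient f θ‖ ≤ η)
    (g : EuclideanSpace ℝ (Fin p))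
    (H : EuclideanSpace ℝ (Fin p) →L[ℝ] EuclideanSpace ℝ (Fin p))
    (hg : ‖g - gradient f θ‖ ≤ γg) (hH : ‖H - hessianOf f θ‖ ≤ γh)
    (hγhm : γh ≤ m / 2)
    (Δ : EuclideanSpace ℝ (Fin p)) (hΔ : Δ = -(H.inverse g)) :
    ‖gradient f (θ + Δ)‖ ≤ 2 * L / m ^ 2 * ‖gradient f θ‖ ^ 2
      + η * (4 * γg * L / m ^ 2 + 2 * γh / m)
      + 2 * L * γg ^ 2 / m ^ 2 + γg + 2 * γg * γh / m := by
  classical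
  set A := hessianOf f θ with hA
  have hγg0 : 0 ≤ γg := le_trans (norm_nonneg _) hg
  have hγh0 : 0 ≤ γh := le_trans (norm_nonneg _) hH
  -- coercivity of H
  have hcoer : ∀ v : EuclideanSpace ℝ (Fin p), m / 2 * ‖v‖ ^ 2 ≤ ⟪H v, v⟫ := by
    intro v
    have h1 := hconv θ v
    have h2 : |⟪(H - A) v, v⟫| ≤ γh * ‖v‖ ^ 2 := by
      calc |⟪(H - A) v, v⟫| ≤ ‖(H - A) v‖ * ‖v‖ := abs_real_inner_le_norm _ _
        _ ≤ (γh * ‖v‖) * ‖v‖ := by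
            refine mul_le_mul_of_nonneg_right ?_ (norm_nonneg v)
            exact le_trans ((H - A).le_opNorm v)
              (mul_le_mul_of_nonneg_right hH (norm_nonneg v))
        _ = γh * ‖v‖ ^ 2 := by ring
    have h3 : ⟪H v, v⟫ = ⟪A v, v⟫ + ⟪(H - A) v, v⟫ := by
      simp [ContinuousLinearMap.sub_apply, inner_sub_left]
    nlinarith [abs_le.mp h2, sq_nonneg ‖v‖]
  have hHlow : ∀ v : EuclideanSpace ℝ (Fin p), m / 2 * ‖v‖ ≤ ‖H v‖ := by
    intro v
    rcases eq_or_ne v 0 with rfl | hv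
    · simp
    · have h1 := hcoer v
      have h2 : ⟪H v, v⟫ ≤ ‖H v‖ * ‖v‖ := real_inner_le_norm _ _
      have hv' : 0 < ‖v‖ := norm_pos_iff.mpr hv
      nlinarith
  -- H is invertible
  have hinj : Function.Injective H := by
    intro v w hvw
    have h1 := hHlow (v - w)
    have h0 : H (v - w) = 0 := by simp [map_sub, hvw]
    rw [h0] at h1
    simp only [norm_zero] at h1
    have hnn : ‖v - w‖ = 0 := by nlinarith [norm_nonneg (v - w)]
    have := norm_eq_zero.mp hnn
    exact sub_eq_zero.mp this
  have hbij : Function.Bijective (H : EuclideanSpace ℝ (Fin p) →ₗ[ℝ] EuclideanSpace ℝ (Fin p)) :=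
    ⟨hinj, LinearMap.injective_iff_surjective.mp hinj⟩
  let e : EuclideanSpace ℝ (Fin p) ≃L[ℝ] EuclideanSpace ℝ (Fin p) :=
    (LinearEquiv.ofBijective _ hbij).toContinuousLinearEquiv
  have heH : (e : EuclideanSpace ℝ (Fin p) →L[ℝ] EuclideanSpace ℝ (Fin p)) = H := by
    ext v; rfl
  have hHinv : H (H.inverse g) = g := by
    conv_lhs => rw [← heH, ContinuousLinearMap.inverse_equiv]
    simp
  have hHΔ : H Δ = -g := by rw [hΔ, map_neg, hHinv]
  -- norm of Δ
  have hgn : ‖g‖ ≤ ‖gradient f θ‖ + γg := by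
    have := norm_sub_norm_le g (gradient f θ)
    linarith
  have hdΔ : m / 2 * ‖Δ‖ ≤ ‖gradient f θ‖ + γg := by
    have h1 := hHlow Δ
    rw [hHΔ, norm_neg] at h1
    linarith
  -- differentiability of the gradient
  have hG1 : ContDiff ℝ 1 (gradient f) := by
    have h1 : ContDiff ℝ 1 (fderiv ℝ f) := hf.fderiv_right (by norm_num)
    exact (InnerProductSpace.toDual ℝ
      (EuclideanSpace ℝ (Fin p))).symm.contDiff.comp h1
  have hGd : ∀ x, HasFDerivAt (gradient f) (hessianOf f x) x := fun x =>
    (hG1.differentiable one_ne_zero x).hasFDerivAt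
  have hHesscont : Continuous (hessianOf f) := hG1.continuous_fderiv one_ne_zero
  -- Taylor estimate via FTC
  have hft : ∀ t : ℝ, HasDerivAt (fun s : ℝ => gradient f (θ + s • Δ) - s • (A Δ))
      ((hessianOf f (θ + t • Δ)) Δ - A Δ) t := by
    intro t
    have hline : HasDerivAt (fun s : ℝ => θ + s • Δ) Δ t := by
      simpa using ((hasDerivAt_id t).smul_const Δ).const_add θ
    have h1 : HasDerivAt (fun s : ℝ => gradient f (θ + s • Δ))
        ((hessianOf f (θ + t • Δ)) Δ) t :=
      (hGd (θ + t • Δ)).comp_hasDerivAt (l := gradient f) (f := fun s : ℝ => θ + s • Δ) t hline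
    have h2 : HasDerivAt (fun s : ℝ => s • (A Δ)) (A Δ) t := by
      simpa using (hasDerivAt_id t).smul_const (A Δ)
    exact h1.sub h2
  have hcontD : Continuous fun t : ℝ => (hessianOf f (θ + t • Δ)) Δ - A Δ := by
    have : Continuous fun t : ℝ => hessianOf f (θ + t • Δ) :=
      hHesscont.comp (continuous_const.add (continuous_id.smul continuous_const))
    exact (this.clm_apply continuous_const).sub continuous_const
  have hint : (∫ t in (0:ℝ)..1, ((hessianOf f (θ + t • Δ)) Δ - A Δ))
      = gradient f (θ + Δ) - A Δ - gradient f θ := by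
    have h := intervalIntegral.integral_eq_sub_of_hasDerivAt
      (f := fun s : ℝ => gradient f (θ + s • Δ) - s • (A Δ))
      (f' := fun t : ℝ => (hessianOf f (θ + t • Δ)) Δ - A Δ)
      (fun t _ => hft t) (hcontD.intervalIntegrable 0 1)
    rw [h]
    simp
  have hkey : ‖gradient f (θ + Δ) - A Δ - gradient f θ‖ ≤ L / 2 * ‖Δ‖ ^ 2 := by
    rw [← hint]
    have hb : ∀ t ∈ Set.uIoc (0:ℝ) 1,
        ‖(hessianOf f (θ + t • Δ)) Δ - A Δ‖ ≤ L * ‖Δ‖ ^ 2 * t := by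
      intro t ht
      rw [Set.uIoc_of_le zero_le_one] at ht
      have ht0 : 0 < t := ht.1
      have ht1 : t ≤ 1 := ht.2
      have h1 : (hessianOf f (θ + t • Δ)) Δ - A Δ = (hessianOf f (θ + t • Δ) - A) Δ := by
        simp
      rw [h1]
      calc ‖(hessianOf f (θ + t • Δ) - A) Δ‖
          ≤ ‖hessianOf f (θ + t • Δ) - A‖ * ‖Δ‖ := (hessianOf f (θ + t • Δ) - A).le_opNorm Δ
        _ ≤ (L * ‖θ + t • Δ - θ‖) * ‖Δ‖ :=
            mul_le_mul_of_nonneg_right (hlip _ _) (norm_nonneg _)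
        _ = L * (t * ‖Δ‖) * ‖Δ‖ := by
            rw [add_sub_cancel_left, norm_smul, Real.norm_eq_abs, abs_of_pos ht0]
        _ = L * ‖Δ‖ ^ 2 * t := by ring
    have h2 := intervalIntegral.norm_integral_le_abs_of_norm_le
      (μ := MeasureTheory.volume)
      (f := fun t : ℝ => (hessianOf f (θ + t • Δ)) Δ - A Δ)
      (g := fun t : ℝ => L * ‖Δ‖ ^ 2 * t)
      (MeasureTheory.ae_restrict_of_forall_mem measurableSet_uIoc hb)
      ((continuous_const.mul continuous_id).intervalIntegrable 0 1)
    have h3 : (∫ t in (0:ℝ)..1, L * ‖Δ‖ ^ 2 * t) = L / 2 * ‖Δ‖ ^ 2 := by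
      rw [intervalIntegral.integral_const_mul, integral_id]
      ring
    rw [h3] at h2
    simpa [abs_of_nonneg (by positivity : (0:ℝ) ≤ L / 2 * ‖Δ‖ ^ 2)] using h2
  -- combine: gradient f θ + A Δ = (gradient f θ - g) - (H - A) Δ
  have hAΔ : gradient f θ + A Δ = (gradient f θ - g) - (H - A) Δ := by
    have : (H - A) Δ = H Δ - A Δ := by simp
    rw [this, hHΔ]
    abel
  have hupper : ‖gradient f (θ + Δ)‖ ≤ L / 2 * ‖Δ‖ ^ 2 + γg + γh * ‖Δ‖ := by
    have h1 : gradient f (θ + Δ)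
        = (gradient f (θ + Δ) - A Δ - gradient f θ) + (gradient f θ + A Δ) := by abel
    rw [h1]
    have h2 : ‖gradient f θ + A Δ‖ ≤ γg + γh * ‖Δ‖ := by
      rw [hAΔ]
      calc ‖(gradient f θ - g) - (H - A) Δ‖
          ≤ ‖gradient f θ - g‖ + ‖(H - A) Δ‖ := norm_sub_le _ _
        _ ≤ γg + γh * ‖Δ‖ := by
            refine add_le_add ?_ ?_
            · rw [norm_sub_rev]; exact hg
            · exact le_trans ((H - A).le_opNorm Δ)
                (mul_le_mul_of_nonneg_right hH (norm_nonneg _))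
    calc ‖(gradient f (θ + Δ) - A Δ - gradient f θ) + (gradient f θ + A Δ)‖
        ≤ ‖gradient f (θ + Δ) - A Δ - gradient f θ‖ + ‖gradient f θ + A Δ‖ := norm_add_le _ _
      _ ≤ L / 2 * ‖Δ‖ ^ 2 + (γg + γh * ‖Δ‖) := add_le_add hkey h2
      _ = L / 2 * ‖Δ‖ ^ 2 + γg + γh * ‖Δ‖ := by ring
  -- final arithmetic
  set n := ‖gradient f θ‖ with hn
  set d := ‖Δ‖ with hd
  have hn0 : 0 ≤ n := norm_nonneg _
  have hd0 : 0 ≤ d := norm_nonneg _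
  have hdb : d ≤ 2 / m * (n + γg) := by
    rw [div_mul_eq_mul_div, le_div_iff₀ hm]
    nlinarith
  have hsum0 : 0 ≤ n + γg := by linarith
  have hsq : d ^ 2 ≤ (2 / m * (n + γg)) ^ 2 := by
    apply sq_le_sq' _ hdb
    nlinarith [div_nonneg (by norm_num : (0:ℝ) ≤ 2) hm.le]
  have hstep : ‖gradient f (θ + Δ)‖ ≤
      2 * L / m ^ 2 * n ^ 2 + 4 * γg * L / m ^ 2 * n + 2 * L * γg ^ 2 / m ^ 2
        + γg + 2 * γh / m * n + 2 * γg * γh / m := by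
    have h1 : L / 2 * d ^ 2 ≤ L / 2 * (2 / m * (n + γg)) ^ 2 :=
      mul_le_mul_of_nonneg_left hsq (by linarith)
    have h2 : γh * d ≤ γh * (2 / m * (n + γg)) := mul_le_mul_of_nonneg_left hdb hγh0
    have h3 : L / 2 * (2 / m * (n + γg)) ^ 2
        = 2 * L / m ^ 2 * n ^ 2 + 4 * γg * L / m ^ 2 * n + 2 * L * γg ^ 2 / m ^ 2 := by
      field_simp
      ring
    have h4 : γh * (2 / m * (n + γg)) = 2 * γh / m * n + 2 * γg * γh / m := by
      field_simp
    rw [h3] at h1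
    rw [h4] at h2
    linarith
  have hc1 : 4 * γg * L / m ^ 2 * n ≤ 4 * γg * L / m ^ 2 * η :=
    mul_le_mul_of_nonneg_left hθ (by positivity)
  have hc2 : 2 * γh / m * n ≤ 2 * γh / m * η :=
    mul_le_mul_of_nonneg_left hθ (by positivity)
  have hrhs : η * (4 * γg * L / m ^ 2 + 2 * γh / m)
      = 4 * γg * L / m ^ 2 * η + 2 * γh / m * η := by ring
  rw [hrhs]
  linarith
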